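/- Let W be a nonempty compact set of channels, p_X an input pmf, and α : W → ℝ a bounded continuous function. Define the relative exponents Δ_α E_{r,F}(R, p_X, W) = inf_{p∈W} [E_{r,F}(R, p_X, p) − α(p)] and Δ_α E_sp(R, p_X, W) = inf_{p∈W} [E_sp(R, p_X, p) − α(p)]. Then for every continuous nondecreasing F : ℝ → ℝ and every rate R ∈ ℝ, Δ_α E_{r,F}(R, p_X, W) = inf_{R' ∈ ℝ} [ Δ_α E_sp(R', p_X, W) + F(R' − R) ]. -/

import Mathlib

open scoped BigOperators

section Defs

variable {𝒳 𝒴 : Type*} [Fintype 𝒳] [Fintype 𝒴]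

/-- `p` is a probability mass function on the finite alphabet `𝒳`. -/
def IsPMF (p : 𝒳 → ℝ) : Prop := (∀ x, 0 ≤ p x) ∧ ∑ x, p x = 1

/-- A channel assigns to each input letter a pmf on `𝒴`. -/
def IsChannel (W : 𝒳 → 𝒴 → ℝ) : Prop := ∀ x, IsPMF (W x)

/-- Conditional Kullback–Leibler divergence `D(q ‖ W | pX)`, base-2 logarithms. -/
noncomputable def condKL (pX : 𝒳 → ℝ) (q W : 𝒳 → 𝒴 → ℝ) : ℝ :=
  ∑ x, ∑ y, pX x * q x y * Real.logb 2 (q x y / W x y)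

/-- Mutual information `I(pX, q)` of the joint pmf `(x, y) ↦ pX x * q x y`. -/
noncomputable def mutInfo (pX : 𝒳 → ℝ) (q : 𝒳 → 𝒴 → ℝ) : ℝ :=
  ∑ x, ∑ y, pX x * q x y * Real.logb 2 (q x y / ∑ x', pX x' * q x' y)

/-- Modified random-coding exponent `E_{r,F}(R, pX, W)`. -/
noncomputable def ErF (F : ℝ → ℝ) (R : ℝ) (pX : 𝒳 → ℝ) (W : 𝒳 → 𝒴 → ℝ) : ℝ :=
  sInf {v : ℝ | ∃ q : 𝒳 → 𝒴 → ℝ, IsChannel q ∧ v = condKL pX q W + F (mutInfo pX q - R)}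

/-- Sphere-packing exponent `E_sp(R, pX, W)`, with value `+∞` if no conditional pmf
satisfies the mutual-information constraint. -/
noncomputable def EspE (R : ℝ) (pX : 𝒳 → ℝ) (W : 𝒳 → 𝒴 → ℝ) : EReal :=
  sInf {v : EReal | ∃ q : 𝒳 → 𝒴 → ℝ,
    IsChannel q ∧ mutInfo pX q ≤ R ∧ v = (condKL pX q W : EReal)}

/-- `E_{r,F}` for a class of channels (infimum over the class). -/
noncomputable def ErFW (F : ℝ → ℝ) (R : ℝ) (pX : 𝒳 → ℝ) (𝒲 : Set (𝒳 → 𝒴 → ℝ)) : ℝ :=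
  sInf {v : ℝ | ∃ p ∈ 𝒲, v = ErF F R pX p}

/-- `E_sp` for a class of channels (infimum over the class). -/
noncomputable def EspEW (R : ℝ) (pX : 𝒳 → ℝ) (𝒲 : Set (𝒳 → 𝒴 → ℝ)) : EReal :=
  sInf {v : EReal | ∃ p ∈ 𝒲, v = EspE R pX p}

end Defs



lemma pmf_le_one {𝒳 : Type*} [Fintype 𝒳] {p : 𝒳 → ℝ} (h : IsPMF p) (x : 𝒳) : p x ≤ 1 := by
  have := Finset.single_le_sum (f := p) (fun i _ => h.1 i) (Finset.mem_univ x)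
  rw [h.2] at this; exact this

lemma key_term (t w : ℝ) (ht0 : 0 ≤ t) (ht1 : t ≤ 1) (hw0 : 0 ≤ w) (hw1 : w ≤ 1) :
    -2 ≤ t * Real.logb 2 (t / w) := by
  rcases eq_or_lt_of_le hw0 with hw | hw
  · simp [← hw, Real.logb_zero]
  rcases eq_or_lt_of_le ht0 with ht | ht
  · simp [← ht]
  have h2 : Real.logb 2 t ≤ Real.logb 2 (t / w) := by
    apply Real.logb_le_logb_of_le (by norm_num) ht
    rw [le_div_iff₀ hw]; nlinarith
  have hlog2 : (0.6931471803 : ℝ) < Real.log 2 := Real.log_two_gt_d9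
  have hinv : Real.log t⁻¹ ≤ t⁻¹ - 1 := Real.log_le_sub_one_of_pos (by positivity)
  rw [Real.log_inv] at hinv
  have htt : t * t⁻¹ = 1 := mul_inv_cancel₀ (ne_of_gt ht)
  have h3 : t - 1 ≤ t * Real.log t := by nlinarith
  have h4 : -2 ≤ t * Real.logb 2 t := by
    rw [Real.logb, mul_div_assoc', le_div_iff₀ (by linarith : (0:ℝ) < Real.log 2)]
    nlinarith
  calc (-2 : ℝ) ≤ t * Real.logb 2 t := h4
    _ ≤ t * Real.logb 2 (t / w) := mul_le_mul_of_nonneg_left h2 ht0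

lemma term_lb {p t w : ℝ} (hp0 : 0 ≤ p) (hp1 : p ≤ 1) (ht0 : 0 ≤ t) (ht1 : t ≤ 1)
    (hw0 : 0 ≤ w) (hw1 : w ≤ 1) : -2 ≤ p * t * Real.logb 2 (t / w) := by
  have h := key_term t w ht0 ht1 hw0 hw1
  rw [mul_assoc]
  nlinarith [mul_nonneg hp0 (by linarith : (0:ℝ) ≤ t * Real.logb 2 (t / w) + 2)]

lemma condKL_lb {𝒳 𝒴 : Type*} [Fintype 𝒳] [Fintype 𝒴] {pX : 𝒳 → ℝ} (hpX : IsPMF pX)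
    {q W : 𝒳 → 𝒴 → ℝ} (hq : IsChannel q) (hW : IsChannel W) :
    -(2 * (Fintype.card 𝒳 * Fintype.card 𝒴)) ≤ condKL pX q W := by
  have h : ∀ x : 𝒳, ∀ y : 𝒴, -2 ≤ pX x * q x y * Real.logb 2 (q x y / W x y) := fun x y =>
    term_lb (hpX.1 x) (pmf_le_one hpX x) ((hq x).1 y) (pmf_le_one (hq x) y)
      ((hW x).1 y) (pmf_le_one (hW x) y)
  calc -(2 * (Fintype.card 𝒳 * Fintype.card 𝒴) : ℝ)
      = ∑ _x : 𝒳, ∑ _y : 𝒴, (-2 : ℝ) := by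
        simp [Finset.sum_const, Finset.card_univ]; ring
    _ ≤ condKL pX q W := by
        apply Finset.sum_le_sum; intro x _
        exact Finset.sum_le_sum fun y _ => h x y

lemma mutInfo_lb {𝒳 𝒴 : Type*} [Fintype 𝒳] [Fintype 𝒴] {pX : 𝒳 → ℝ} (hpX : IsPMF pX)
    {q : 𝒳 → 𝒴 → ℝ} (hq : IsChannel q) :
    -(2 * (Fintype.card 𝒳 * Fintype.card 𝒴)) ≤ mutInfo pX q := by
  have hm0 : ∀ y : 𝒴, 0 ≤ ∑ x', pX x' * q x' y := fun y =>
    Finset.sum_nonneg fun x _ => mul_nonneg (hpX.1 x) ((hq x).1 y)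
  have hm1 : ∀ y : 𝒴, (∑ x', pX x' * q x' y) ≤ 1 := by
    intro y
    calc (∑ x', pX x' * q x' y) ≤ ∑ x', pX x' :=
          Finset.sum_le_sum fun x _ => by
            nlinarith [hpX.1 x, (hq x).1 y, pmf_le_one (hq x) y]
      _ = 1 := hpX.2
  have h : ∀ x : 𝒳, ∀ y : 𝒴,
      -2 ≤ pX x * q x y * Real.logb 2 (q x y / ∑ x', pX x' * q x' y) := fun x y =>
    term_lb (hpX.1 x) (pmf_le_one hpX x) ((hq x).1 y) (pmf_le_one (hq x) y) (hm0 y) (hm1 y)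
  calc -(2 * (Fintype.card 𝒳 * Fintype.card 𝒴) : ℝ)
      = ∑ _x : 𝒳, ∑ _y : 𝒴, (-2 : ℝ) := by
        simp [Finset.sum_const, Finset.card_univ]; ring
    _ ≤ mutInfo pX q := by
        apply Finset.sum_le_sum; intro x _
        exact Finset.sum_le_sum fun y _ => h x y

lemma ereal_le_add_coe_iff (a c : ℝ) (x : EReal) :
    (a : EReal) ≤ x + (c : EReal) ↔ ((a - c : ℝ) : EReal) ≤ x := by
  induction x with
  | bot => simp [← EReal.coe_sub, EReal.bot_add]
  | coe r =>
      rw [← EReal.coe_add, EReal.coe_le_coe_iff, EReal.coe_le_coe_iff]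
      constructor <;> intro <;> linarith
  | top => simp

/-- For bounded continuous `α : 𝒲 → ℝ`, the relative exponents
`Δ_α E_{r,F}(R,pX,𝒲) = inf_{p∈𝒲} [E_{r,F}(R,pX,p) - α(p)]` and
`Δ_α E_sp(R,pX,𝒲) = inf_{p∈𝒲} [E_sp(R,pX,p) - α(p)]` satisfy, for every continuous
nondecreasing `F` and every `R`,
`Δ_α E_{r,F}(R,pX,𝒲) = inf_{R'} [Δ_α E_sp(R',pX,𝒲) + F(R'-R)]`. -/
theorem relative_ErF_eq_inf_relative_Esp {𝒳 𝒴 : Type*} [Fintype 𝒳] [Fintype 𝒴]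
    (pX : 𝒳 → ℝ) (hpX : IsPMF pX)
    (𝒲 : Set (𝒳 → 𝒴 → ℝ)) (h𝒲ne : 𝒲.Nonempty) (h𝒲cpt : IsCompact 𝒲)
    (h𝒲ch : ∀ p ∈ 𝒲, IsChannel p)
    (α : (𝒳 → 𝒴 → ℝ) → ℝ) (hαcont : ContinuousOn α 𝒲)
    (hαbdd : ∃ C : ℝ, ∀ p ∈ 𝒲, |α p| ≤ C)
    (F : ℝ → ℝ) (hFcont : Continuous F) (hFmono : Monotone F) (R : ℝ) :
    ((sInf {v : ℝ | ∃ p ∈ 𝒲, v = ErF F R pX p - α p} : ℝ) : EReal)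
      = ⨅ R' : ℝ,
          (sInf {v : EReal | ∃ p ∈ 𝒲, v = EspE R' pX p - (α p : EReal)}
            + (F (R' - R) : EReal)) := by
  obtain ⟨C, hC⟩ := hαbdd
  set M : ℝ := 2 * (Fintype.card 𝒳 * Fintype.card 𝒴) with hM
  set B : ℝ := -M + F (-M - R) with hB
  set S : Set ℝ := {v | ∃ p ∈ 𝒲, v = ErF F R pX p - α p} with hS
  -- the set defining ErF for a channel p
  have hEp : ∀ p : 𝒳 → 𝒴 → ℝ, ErF F R pX p =
      sInf {v : ℝ | ∃ q : 𝒳 → 𝒴 → ℝ, IsChannel q ∧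
        v = condKL pX q p + F (mutInfo pX q - R)} := fun p => rfl
  have hEpne : ∀ p ∈ 𝒲, Set.Nonempty {v : ℝ | ∃ q : 𝒳 → 𝒴 → ℝ, IsChannel q ∧
      v = condKL pX q p + F (mutInfo pX q - R)} := fun p hp =>
    ⟨_, p, h𝒲ch p hp, rfl⟩
  have hEpbdd : ∀ p ∈ 𝒲, B ∈ lowerBounds {v : ℝ | ∃ q : 𝒳 → 𝒴 → ℝ, IsChannel q ∧
      v = condKL pX q p + F (mutInfo pX q - R)} := by
    rintro p hp v ⟨q, hq, rfl⟩
    have h1 : -M ≤ condKL pX q p := condKL_lb hpX hq (h𝒲ch p hp)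
    have h2 : -M ≤ mutInfo pX q := mutInfo_lb hpX hq
    have h3 : F (-M - R) ≤ F (mutInfo pX q - R) := hFmono (by linarith)
    linarith
  have hErF_lb : ∀ p ∈ 𝒲, B ≤ ErF F R pX p := fun p hp => by
    rw [hEp p]; exact le_csInf (hEpne p hp) (fun v hv => hEpbdd p hp hv)
  have hSne : S.Nonempty := by
    obtain ⟨p, hp⟩ := h𝒲ne; exact ⟨_, p, hp, rfl⟩
  have hSbdd : BddBelow S := by
    refine ⟨B - C, ?_⟩
    rintro v ⟨p, hp, rfl⟩
    have := hErF_lb p hp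
    have := (abs_le.mp (hC p hp)).2
    linarith
  apply le_antisymm
  · -- LHS ≤ iInf
    refine le_iInf fun R' => ?_
    rw [ereal_le_add_coe_iff]
    refine le_sInf ?_
    rintro v ⟨p, hp, rfl⟩
    have hsub : EspE R' pX p - (α p : EReal) = EspE R' pX p + ((-(α p) : ℝ) : EReal) := by
      rw [EReal.coe_neg]; rfl
    rw [hsub, ereal_le_add_coe_iff]
    unfold EspE
    refine le_sInf ?_
    rintro w ⟨q, hq, hqI, rfl⟩
    rw [EReal.coe_le_coe_iff]
    have h1 : sInf S ≤ ErF F R pX p - α p := csInf_le hSbdd ⟨p, hp, rfl⟩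
    have h2 : ErF F R pX p ≤ condKL pX q p + F (mutInfo pX q - R) := by
      rw [hEp p]
      exact csInf_le ⟨B, hEpbdd p hp⟩ ⟨q, hq, rfl⟩
    have h3 : F (mutInfo pX q - R) ≤ F (R' - R) := hFmono (by linarith)
    linarith
  · -- iInf ≤ LHS
    by_contra hcon
    rw [not_le] at hcon
    obtain ⟨c, hc1, hc2⟩ := EReal.lt_iff_exists_real_btwn.mp hcon
    rw [EReal.coe_lt_coe_iff] at hc1
    obtain ⟨v, ⟨p, hp, rfl⟩, hvc⟩ := (csInf_lt_iff hSbdd hSne).mp hc1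
    have h4 : ErF F R pX p < c + α p := by linarith
    rw [hEp p] at h4
    obtain ⟨e, ⟨q, hq, rfl⟩, hec⟩ :=
      (csInf_lt_iff ⟨B, hEpbdd p hp⟩ (hEpne p hp)).mp h4
    set R' : ℝ := mutInfo pX q with hR'
    have h5 : EspE R' pX p ≤ (condKL pX q p : EReal) :=
      sInf_le ⟨q, hq, le_refl _, rfl⟩
    have h6 : sInf {v : EReal | ∃ p ∈ 𝒲, v = EspE R' pX p - (α p : EReal)}
        ≤ EspE R' pX p - (α p : EReal) := sInf_le ⟨p, hp, rfl⟩
    have h7 : EspE R' pX p - (α p : EReal) ≤ ((condKL pX q p - α p : ℝ) : EReal) := by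
      rw [EReal.coe_sub]
      exact EReal.sub_le_sub h5 (le_refl _)
    have h8 : (⨅ R'' : ℝ,
        (sInf {v : EReal | ∃ p ∈ 𝒲, v = EspE R'' pX p - (α p : EReal)}
          + (F (R'' - R) : EReal))) ≤
        sInf {v : EReal | ∃ p ∈ 𝒲, v = EspE R' pX p - (α p : EReal)}
          + (F (R' - R) : EReal) := iInf_le _ R'
    have h9 : sInf {v : EReal | ∃ p ∈ 𝒲, v = EspE R' pX p - (α p : EReal)}
        + (F (R' - R) : EReal) ≤ ((c : ℝ) : EReal) := by
      calc sInf {v : EReal | ∃ p ∈ 𝒲, v = EspE R' pX p - (α p : EReal)}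
            + (F (R' - R) : EReal)
          ≤ ((condKL pX q p - α p : ℝ) : EReal) + (F (R' - R) : EReal) :=
            add_le_add_left (le_trans h6 h7) _
        _ = ((condKL pX q p - α p + F (R' - R) : ℝ) : EReal) := by
            rw [← EReal.coe_add]
        _ ≤ ((c : ℝ) : EReal) := by
            rw [EReal.coe_le_coe_iff]; linarith
    exact absurd (lt_of_le_of_lt (le_trans h8 h9) hc2) (lt_irrefl _)
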